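/- arXiv:2308.04871 — 3 statements merged into one kernel-verified Lean document; each statement's English description precedes it below -/
import Mathlib

section
/- In Penney's game with a fair coin, the pattern HH is beaten by the pattern TH: the probability that TH appears before HH in an infinite sequence of independent fair coin flips is 3/4. -/
open MeasureTheory ProbabilityTheory
open scoped ENNReal

/-- Penney's game with a fair coin: in an infinite sequence of i.i.d. fair coin
flips (`true` = H, `false` = T), the probability that the pattern TH appears
before the pattern HH is `3/4`.  "TH appears before HH" is expressed as: there is
an index `n` where TH occurs such that HH occurs at no index `m ≤ n`. -/
theorem stmt_13 {Ω : Type*} [MeasurableSpace Ω] (μ : Measure Ω) [IsProbabilityMeasure μ]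
    (X : ℕ → Ω → Bool) (hmeas : ∀ n, Measurable (X n))
    (hindep : iIndepFun X μ)
    (hfair : ∀ n, μ {ω | X n ω = true} = 1/2) :
    μ {ω | ∃ n : ℕ, (X n ω = false ∧ X (n+1) ω = true) ∧
        ∀ m ≤ n, ¬ (X m ω = true ∧ X (m+1) ω = true)} = 3/4 := by
  have hmT : ∀ n, MeasurableSet {ω | X n ω = true} :=
    fun n => (hmeas n) (measurableSet_singleton true)
  have hmF : ∀ n, MeasurableSet {ω | X n ω = false} :=
    fun n => (hmeas n) (measurableSet_singleton false)
  have hfalse : ∀ n, μ {ω | X n ω = false} = 1/2 := by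
    intro n
    have hc : {ω | X n ω = false} = {ω | X n ω = true}ᶜ := by
      ext ω; simp [Bool.not_eq_true]
    rw [hc, measure_compl (hmT n) (measure_ne_top μ _), hfair n, measure_univ]
    rw [ENNReal.sub_eq_of_eq_add (by norm_num : (1:ℝ≥0∞)/2 ≠ ⊤)
      (by rw [ENNReal.div_add_div_same, show (1:ℝ≥0∞)+1 = 2 from by norm_num,
            ENNReal.div_self (by norm_num) (by norm_num)])]
  -- the set A = {HH at 0}
  set A : Set Ω := {ω | X 0 ω = true} ∩ {ω | X 1 ω = true} with hAdef
  have hmuA : μ A = 1/4 := by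
    have h01 : IndepFun (X 0) (X 1) μ := hindep.indepFun (by norm_num)
    have := h01.measure_inter_preimage_eq_mul {true} {true}
      (measurableSet_singleton true) (measurableSet_singleton true)
    have hA : A = X 0 ⁻¹' {true} ∩ X 1 ⁻¹' {true} := rfl
    rw [hA, this]
    have h0 : X 0 ⁻¹' {true} = {ω | X 0 ω = true} := rfl
    have h1 : X 1 ⁻¹' {true} = {ω | X 1 ω = true} := rfl
    rw [h0, h1, hfair 0, hfair 1]
    rw [one_div, one_div, ← ENNReal.mul_inv (Or.inl (by norm_num)) (Or.inl (by norm_num))]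
    norm_num
  -- the null set N = {all tails from index 1 on}
  set N : Set Ω := {ω | ∀ k, 1 ≤ k → X k ω = false} with hNdef
  have hmN : MeasurableSet N := by
    have : N = ⋂ k, ⋂ (_ : 1 ≤ k), {ω | X k ω = false} := by
      ext ω; simp [hNdef]
    rw [this]
    exact MeasurableSet.iInter fun k => MeasurableSet.iInter fun _ => hmF k
  have hmuN : μ N = 0 := by
    have hbound : ∀ n : ℕ, μ N ≤ (1/2 : ℝ≥0∞) ^ n := by
      intro n
      have hsub : N ⊆ ⋂ k ∈ Finset.Icc 1 n, X k ⁻¹' {false} := by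
        intro ω hω
        simp only [Set.mem_iInter]
        intro k hk
        exact hω k (Finset.mem_Icc.mp hk).1
      calc μ N ≤ μ (⋂ k ∈ Finset.Icc 1 n, X k ⁻¹' {false}) := measure_mono hsub
        _ = ∏ k ∈ Finset.Icc 1 n, μ (X k ⁻¹' {false}) :=
            hindep.measure_inter_preimage_eq_mul (Finset.Icc 1 n)
              (sets := fun _ => {false}) (fun i _ => measurableSet_singleton false)
        _ = ∏ k ∈ Finset.Icc 1 n, (1/2 : ℝ≥0∞) := by
            refine Finset.prod_congr rfl fun k _ => ?_
            exact hfalse k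
        _ = (1/2 : ℝ≥0∞) ^ n := by
            rw [Finset.prod_const, Nat.card_Icc]; norm_num
    have htend : Filter.Tendsto (fun n : ℕ => (1/2 : ℝ≥0∞) ^ n) Filter.atTop (nhds 0) :=
      ENNReal.tendsto_pow_atTop_nhds_zero_of_lt_one (by norm_num)
    have := ge_of_tendsto' htend hbound
    exact le_antisymm this zero_le
  -- the event equals (A ∪ N)ᶜ
  have hEq : {ω | ∃ n : ℕ, (X n ω = false ∧ X (n+1) ω = true) ∧
        ∀ m ≤ n, ¬ (X m ω = true ∧ X (m+1) ω = true)} = (A ∪ N)ᶜ := by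
    ext ω
    simp only [Set.mem_setOf_eq, Set.mem_compl_iff, Set.mem_union, hAdef, hNdef,
      Set.mem_inter_iff, not_or]
    constructor
    · rintro ⟨n, ⟨hn1, hn2⟩, hno⟩
      refine ⟨fun h => hno 0 (Nat.zero_le n) ⟨h.1, h.2⟩, fun h => ?_⟩
      have := h (n+1) (Nat.le_add_left 1 n)
      simp [hn2] at this
    · rintro ⟨hA, hN⟩
      push_neg at hN
      obtain ⟨k₀, hk₀1, hk₀T⟩ := hN
      simp only [ne_eq, Bool.not_eq_false] at hk₀T
      by_cases hHH : ∃ m, X m ω = true ∧ X (m+1) ω = true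
      · -- least HH position
        classical
        let m := Nat.find hHH
        have hm : X m ω = true ∧ X (m+1) ω = true := Nat.find_spec hHH
        have hmpos : m ≠ 0 := by
          intro h0
          exact hA ⟨by rw [← h0]; exact hm.1, by rw [show (1:ℕ) = 0+1 from rfl, ← h0]; exact hm.2⟩
        obtain ⟨p, hp⟩ : ∃ p, m = p + 1 := ⟨m - 1, (Nat.succ_pred_eq_of_pos (Nat.pos_of_ne_zero hmpos)).symm⟩
        refine ⟨p, ⟨?_, by rw [← hp]; exact hm.1⟩, ?_⟩
        · by_contra hpf
          simp only [Bool.not_eq_false] at hpf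
          have : p < m := by omega
          exact Nat.find_min hHH this ⟨hpf, by rw [← hp]; exact hm.1⟩
        · intro j hj hjHH
          have : j < m := by omega
          exact Nat.find_min hHH this hjHH
      · -- no HH at all; least true position ≥ 1
        classical
        have hex : ∃ k, 1 ≤ k ∧ X k ω = true := ⟨k₀, hk₀1, hk₀T⟩
        let k := Nat.find hex
        have hk : 1 ≤ k ∧ X k ω = true := Nat.find_spec hex
        obtain ⟨p, hp⟩ : ∃ p, k = p + 1 := ⟨k - 1, (Nat.succ_pred_eq_of_pos hk.1).symm⟩
        refine ⟨p, ⟨?_, by rw [← hp]; exact hk.2⟩, fun j _ hjHH => hHH ⟨j, hjHH⟩⟩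
        by_contra hpf
        simp only [Bool.not_eq_false] at hpf
        rcases Nat.eq_zero_or_pos p with h0 | hppos
        · subst h0
          exact hHH ⟨0, hpf, by rw [show (0:ℕ)+1 = k from hp.symm]; exact hk.2⟩
        · have : p < k := by omega
          exact Nat.find_min hex this ⟨hppos, hpf⟩
  rw [hEq]
  have hmA : MeasurableSet A := (hmT 0).inter (hmT 1)
  rw [measure_compl (hmA.union hmN) (measure_ne_top μ _)]
  have hun : μ (A ∪ N) = μ A :=
    le_antisymm ((measure_union_le _ _).trans (by rw [hmuN, add_zero]))
      (measure_mono Set.subset_union_left)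
  rw [hun, hmuA, measure_univ]
  rw [ENNReal.sub_eq_of_eq_add (by norm_num : (1:ℝ≥0∞)/4 ≠ ⊤)
    (by rw [ENNReal.div_add_div_same, show (3:ℝ≥0∞)+1 = 4 from by norm_num,
          ENNReal.div_self (by norm_num) (by norm_num)])]
end

section
/- There exist two measures of a binary classifier that cannot be simultaneously equalized across two groups except in degenerate cases: if a classifier achieves equal positive predictive value across two groups with different base rates, and has nonzero false positive and false negative rates, then it cannot also have equal false positive rates and equal false negative rates across the groups. -/
/-- Impossibility of simultaneously equalizing fairness measures: if a binary
classifier achieves equal positive predictive value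
`PPV = p(1-FNR)/(p(1-FNR)+(1-p)FPR)` across two groups with different base rates
`p₁ ≠ p₂ ∈ (0,1)`, and has nonzero false positive and false negative rates
(all in `(0,1)`), then it cannot also have equal false positive rates and equal
false negative rates across the groups. -/
theorem stmt_15 (p₁ p₂ fpr₁ fpr₂ fnr₁ fnr₂ : ℝ)
    (hp₁ : p₁ ∈ Set.Ioo (0:ℝ) 1) (hp₂ : p₂ ∈ Set.Ioo (0:ℝ) 1) (hp : p₁ ≠ p₂)
    (hfpr₁ : fpr₁ ∈ Set.Ioo (0:ℝ) 1) (hfpr₂ : fpr₂ ∈ Set.Ioo (0:ℝ) 1)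
    (hfnr₁ : fnr₁ ∈ Set.Ioo (0:ℝ) 1) (hfnr₂ : fnr₂ ∈ Set.Ioo (0:ℝ) 1)
    (hppv : p₁ * (1 - fnr₁) / (p₁ * (1 - fnr₁) + (1 - p₁) * fpr₁) =
            p₂ * (1 - fnr₂) / (p₂ * (1 - fnr₂) + (1 - p₂) * fpr₂)) :
    ¬ (fpr₁ = fpr₂ ∧ fnr₁ = fnr₂) := by
  rintro ⟨hf, hn⟩
  subst hf hn
  obtain ⟨h1, h2⟩ := hp₁
  obtain ⟨h3, h4⟩ := hp₂
  obtain ⟨h5, h6⟩ := hfpr₁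
  obtain ⟨h7, h8⟩ := hfnr₁
  have d1 : p₁ * (1 - fnr₁) + (1 - p₁) * fpr₁ > 0 := by nlinarith
  have d2 : p₂ * (1 - fnr₁) + (1 - p₂) * fpr₁ > 0 := by nlinarith
  rw [div_eq_div_iff (ne_of_gt d1) (ne_of_gt d2)] at hppv
  apply hp
  nlinarith [mul_pos h5 (sub_pos.mpr h8)]
end

section
/- In a structure satisfying the paper's three Peano axioms, the iterates of 1 under σ exhaust N: the map n ↦ σⁿ(1) from ℕ (including 0, with σ⁰(1) = 1) to N is a bijection. -/
/-- In a structure satisfying the paper's three Peano axioms, the iterates of `1`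
under `σ` exhaust `N`: the map `n ↦ σⁿ(1)` (with `σ⁰(1) = 1`) is a bijection from
`ℕ` to `N`. -/
theorem stmt_18 {N : Type*} (one : N) (σ : N → N)
    (hne : ∀ n, σ n ≠ one) (hinj : Function.Injective σ)
    (hsurj : ∀ m : N, m ≠ one → ∃ n, σ n = m)
    (hind : ∀ S : Set N, one ∈ S → (∀ n ∈ S, σ n ∈ S) → S = Set.univ) :
    Function.Bijective (fun n : ℕ => σ^[n] one) := by
  constructor
  · intro a b h
    simp only at h
    induction a generalizing b with
    | zero =>
      cases b with
      | zero => rfl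
      | succ b =>
        exact absurd h.symm (by rw [Function.iterate_succ_apply']; exact hne _)
    | succ a ih =>
      cases b with
      | zero =>
        exact absurd h (by rw [Function.iterate_succ_apply']; exact hne _)
      | succ b =>
        rw [Function.iterate_succ_apply', Function.iterate_succ_apply'] at h
        exact congrArg Nat.succ (ih (hinj h))
  · intro m
    have := hind (Set.range fun n : ℕ => σ^[n] one) ⟨0, rfl⟩ ?_
    · exact (this ▸ Set.mem_univ m : m ∈ _)
    · rintro _ ⟨n, rfl⟩
      exact ⟨n + 1, Function.iterate_succ_apply' σ n one⟩
end
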